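/- For all integers d ≥ 1, k ≥ 2, h ≥ 2 and r ≥ kh, there exist a constant c > 0 and an integer N such that for all n ≥ N, every subset A ⊆ [n]^d with |A| ≥ n^d/log n, and every finite collection 𝒟 of r-templates of A satisfying (a) every P ∈ 𝒟 has R(P) ≤ |A|^{k(h−1)+1}/(log n)^{5kh}, (b) every P ∈ 𝒟 has |{x ∈ A : |P(x)| ≤ kh−2}| > |A|/(log n)^3, and (c) |𝒟| ≤ 2^{|A|·n^{−k(h−1)d/(kh−1)}·(log n)^{10}}, the number of r-colorings of A without rainbow solutions to the B_{k,h}-equation that are subtemplates of at least one P ∈ 𝒟 is at most 2^{−c·|A|/(log n)^3}·(kh−1)^{|A|}. -/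

import Mathlib

open Finset

/-- The `d`-dimensional grid `[n]^d = {1,…,n}^d`, as a finset of functions `Fin d → ℕ`. -/
def grid (n d : ℕ) : Finset (Fin d → ℕ) :=
  Fintype.piFinset fun _ => Finset.Icc 1 n

/-- `X` is a `B_{k,h}`-solution set: `X` consists of `k*h` (pairwise distinct) points that can
be partitioned into `k` groups of `h` points each, all groups having the same sum. -/
def IsBkhSol (d k h : ℕ) (X : Finset (Fin d → ℕ)) : Prop :=
  X.card = k * h ∧
  ∃ P : Fin k → Finset (Fin d → ℕ),
    (∀ ℓ, (P ℓ).card = h) ∧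
    (∀ ℓ₁ ℓ₂, ℓ₁ ≠ ℓ₂ → Disjoint (P ℓ₁) (P ℓ₂)) ∧
    Finset.univ.biUnion P = X ∧
    (∀ ℓ₁ ℓ₂ : Fin k, (P ℓ₁).sum id = (P ℓ₂).sum id)

/-- The coloring `c` of `A` has a rainbow solution to the `B_{k,h}`-equation. -/
def HasRainbow (d k h r : ℕ) (A : Finset (Fin d → ℕ)) (c : ↥A → Fin r) : Prop :=
  ∃ X : Finset ↥A, IsBkhSol d k h (X.image Subtype.val) ∧ Set.InjOn c ↑X

/-- `gr d k h r A` is the number of `r`-colorings of `A` without rainbow solutions to the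
`B_{k,h}`-equation. -/
noncomputable def gr (d k h r : ℕ) (A : Finset (Fin d → ℕ)) : ℕ :=
  Nat.card {c : ↥A → Fin r // ¬ HasRainbow d k h r A c}

/-- `fdkh d k h A` is the number of `B_{k,h}`-solution sets contained in `A`. -/
noncomputable def fdkh (d k h : ℕ) (A : Finset (Fin d → ℕ)) : ℕ :=
  Nat.card {X : Finset (Fin d → ℕ) // X ⊆ A ∧ IsBkhSol d k h X}

/-- `S` is a rainbow-solution subtemplate of the `r`-template `P` of `A`: a `B_{k,h}`-solution
set in `A` together with an injective assignment of colors from the palettes of `P`. -/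
def IsRainbowSub (d k h r : ℕ) (A : Finset (Fin d → ℕ))
    (P : (Fin d → ℕ) → Finset (Fin r)) (S : Finset ((Fin d → ℕ) × Fin r)) : Prop :=
  Set.InjOn Prod.fst (S : Set ((Fin d → ℕ) × Fin r)) ∧
  Set.InjOn Prod.snd (S : Set ((Fin d → ℕ) × Fin r)) ∧
  S.image Prod.fst ⊆ A ∧ IsBkhSol d k h (S.image Prod.fst) ∧
  ∀ p ∈ S, p.2 ∈ P p.1

/-- `rainbowCount d k h r A P` is the number `R(P)` of rainbow-solution subtemplates of `P`. -/
noncomputable def rainbowCount (d k h r : ℕ) (A : Finset (Fin d → ℕ))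
    (P : (Fin d → ℕ) → Finset (Fin r)) : ℕ :=
  Nat.card {S : Finset ((Fin d → ℕ) × Fin r) // IsRainbowSub d k h r A P S}
section Helpers

open Finset

variable {d k h r : ℕ}

/-- Greedy injective choice of colors from palettes of size at least `X.card`. -/
lemma exists_rainbow_assignment {α : Type*} [DecidableEq α] (hr0 : 0 < r) (X : Finset α)
    (Q : α → Finset (Fin r)) (hQ : ∀ x ∈ X, X.card ≤ (Q x).card) :
    ∃ f : α → Fin r, Set.InjOn f ↑X ∧ ∀ x ∈ X, f x ∈ Q x := by
  classical
  induction X using Finset.induction_on with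
  | empty =>
      exact ⟨fun _ => ⟨0, hr0⟩, by simp [Set.InjOn], by simp⟩
  | @insert a s ha ih =>
      obtain ⟨f, hfinj, hfmem⟩ := ih (fun x hx => le_trans (by
        simp [Finset.card_insert_of_notMem ha, Nat.le_succ]) (hQ x (mem_insert_of_mem hx)))
      have hcard : 0 < (Q a \ s.image f).card := by
        have h1 : (s.image f).card ≤ s.card := Finset.card_image_le
        have h2 : s.card + 1 ≤ (Q a).card := by
          simpa [Finset.card_insert_of_notMem ha] using hQ a (mem_insert_self a s)
        have := Finset.le_card_sdiff (s.image f) (Q a)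
        omega
      obtain ⟨y, hy⟩ := Finset.card_pos.mp hcard
      rw [Finset.mem_sdiff] at hy
      have hne : ∀ v ∈ s, v ≠ a := fun v hv hva => ha (hva ▸ hv)
      refine ⟨Function.update f a y, ?_, ?_⟩
      · intro u hu v hv huv
        simp only [Finset.coe_insert, Set.mem_insert_iff, Finset.mem_coe] at hu hv
        rcases hu with rfl | hu <;> rcases hv with rfl | hv
        · rfl
        · exfalso
          rw [Function.update_self, Function.update_of_ne (hne v hv)] at huv
          exact hy.2 (Finset.mem_image.mpr ⟨v, hv, huv.symm⟩)
        · exfalso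
          rw [Function.update_self, Function.update_of_ne (hne u hu)] at huv
          exact hy.2 (Finset.mem_image.mpr ⟨u, hu, huv⟩)
        · rw [Function.update_of_ne (hne u hu), Function.update_of_ne (hne v hv)] at huv
          exact hfinj hu hv huv
      · intro x hx
        rcases Finset.mem_insert.mp hx with rfl | hx
        · rw [Function.update_self]; exact hy.1
        · rw [Function.update_of_ne (hne x hx)]; exact hfmem x hx

/-- A finset all of whose members satisfy `p` has at most `Nat.card {b // p b}` elements. -/
lemma card_le_natCard {β : Type*} (Q : Finset β) (p : β → Prop) [Finite {b : β // p b}]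
    (hQ : ∀ b ∈ Q, p b) : Q.card ≤ Nat.card {b : β // p b} := by
  rw [← Nat.card_eq_finsetCard]
  exact Nat.card_le_card_of_injective (fun x => ⟨x.1, hQ x.1 x.2⟩)
    (fun x y hxy => Subtype.ext (by simpa using congrArg Subtype.val hxy))

lemma finite_rainbowsub (A : Finset (Fin d → ℕ)) (P : (Fin d → ℕ) → Finset (Fin r)) :
    Finite {S : Finset ((Fin d → ℕ) × Fin r) // IsRainbowSub d k h r A P S} := by
  classical
  refine Finite.of_injective
    (fun S => (⟨S.1, ?_⟩ : ((A ×ˢ (Finset.univ : Finset (Fin r))).powerset : Finset _)))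
    ?_
  · rw [Finset.mem_powerset]
    intro pr hpr
    rw [Finset.mem_product]
    exact ⟨S.2.2.2.1 (Finset.mem_image_of_mem Prod.fst hpr), Finset.mem_univ _⟩
  · intro S T hST
    exact Subtype.ext (by simpa using congrArg Subtype.val hST)

end Helpers
section Tuples

open Finset

variable {d : ℕ}

/-- All `k`-tuples of `h`-tuples of elements of `W` whose `k` group sums agree. -/
def tupleSet (d k h : ℕ) (W : Finset (Fin d → ℕ)) : Finset (Fin k → Fin h → (Fin d → ℕ)) :=
  (Fintype.piFinset fun _ : Fin k => Fintype.piFinset fun _ : Fin h => W).filter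
    (fun y => ∀ j₁ j₂ : Fin k, ∑ i, y j₁ i = ∑ i, y j₂ i)

/-- The `h`-tuples of elements of `W` with sum `s`. -/
def rowSet (d h : ℕ) (W : Finset (Fin d → ℕ)) (s : Fin d → ℕ) : Finset (Fin h → (Fin d → ℕ)) :=
  (Fintype.piFinset fun _ : Fin h => W).filter (fun z => ∑ i, z i = s)

/-- All possible sums of `h`-tuples of elements of `W`. -/
def sumSet (d h : ℕ) (W : Finset (Fin d → ℕ)) : Finset (Fin d → ℕ) :=
  (Fintype.piFinset fun _ : Fin h => W).image (fun z => ∑ i, z i)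

lemma mem_tupleSet_iff {k h : ℕ} {W : Finset (Fin d → ℕ)} {y : Fin k → Fin h → (Fin d → ℕ)} :
    y ∈ tupleSet d k h W ↔ (∀ j i, y j i ∈ W) ∧ ∀ j₁ j₂ : Fin k, ∑ i, y j₁ i = ∑ i, y j₂ i := by
  simp [tupleSet, Fintype.mem_piFinset]

lemma tuple_card_eq {k h : ℕ} (hk : 0 < k) (W : Finset (Fin d → ℕ)) :
    (tupleSet d k h W).card = ∑ s ∈ sumSet d h W, (rowSet d h W s).card ^ k := by
  classical
  set j₀ : Fin k := ⟨0, hk⟩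
  rw [Finset.card_eq_sum_card_fiberwise (f := fun y : Fin k → Fin h → (Fin d → ℕ) => ∑ i, y j₀ i)
    (t := sumSet d h W) ?_]
  · refine Finset.sum_congr rfl fun s hs => ?_
    have hset : (tupleSet d k h W).filter (fun y => ∑ i, y j₀ i = s)
        = Fintype.piFinset (fun _ : Fin k => rowSet d h W s) := by
      ext y
      simp only [Finset.mem_filter, Fintype.mem_piFinset, tupleSet, rowSet]
      constructor
      · rintro ⟨⟨hmem, heq⟩, hs0⟩
        exact fun j => ⟨hmem j, by rw [heq j j₀]; exact hs0⟩
      · intro hall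
        exact ⟨⟨fun j => (hall j).1, fun j₁ j₂ => by rw [(hall j₁).2, (hall j₂).2]⟩, (hall j₀).2⟩
    rw [hset, Fintype.card_piFinset]
    simp
  · intro y hy
    rw [Finset.mem_coe, mem_tupleSet_iff] at hy; rw [Finset.mem_coe]
    refine Finset.mem_image.mpr ⟨y j₀, ?_, rfl⟩
    rw [Fintype.mem_piFinset]
    exact fun i => hy.1 j₀ i

lemma sum_rowSet_card (h : ℕ) (W : Finset (Fin d → ℕ)) :
    ∑ s ∈ sumSet d h W, (rowSet d h W s).card = W.card ^ h := by
  classical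
  have key := Finset.card_eq_sum_card_fiberwise
    (f := fun z : Fin h → (Fin d → ℕ) => ∑ i, z i)
    (s := Fintype.piFinset fun _ : Fin h => W) (t := sumSet d h W)
    (fun z hz => Finset.mem_image_of_mem _ hz)
  rw [Fintype.card_piFinset] at key
  simpa [rowSet] using key.symm

lemma sumSet_card_le (h n : ℕ) (W : Finset (Fin d → ℕ)) (hW : W ⊆ grid n d) :
    (sumSet d h W).card ≤ (h * n + 1) ^ d := by
  classical
  have hsub : sumSet d h W ⊆ Fintype.piFinset (fun _ : Fin d => Finset.range (h * n + 1)) := by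
    intro s hs
    obtain ⟨z, hz, rfl⟩ := Finset.mem_image.mp hs
    rw [Fintype.mem_piFinset] at hz ⊢
    intro ℓ
    rw [Finset.mem_range]
    have happ : (∑ i, z i) ℓ = ∑ i, z i ℓ := Finset.sum_apply ℓ univ z
    rw [happ]
    have hle : ∀ i, z i ℓ ≤ n := fun i => by
      have hmem := hW (hz i)
      rw [grid, Fintype.mem_piFinset] at hmem
      exact (Finset.mem_Icc.mp (hmem ℓ)).2
    calc ∑ i, z i ℓ ≤ ∑ _i : Fin h, n := Finset.sum_le_sum (fun i _ => hle i)
      _ = h * n := by simp [Finset.sum_const, Finset.card_univ, mul_comm]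
      _ < h * n + 1 := Nat.lt_succ_self _
  calc (sumSet d h W).card ≤ _ := Finset.card_le_card hsub
    _ = (h * n + 1) ^ d := by rw [Fintype.card_piFinset]; simp

lemma tuple_lower {k h n : ℕ} (hk : 0 < k) (hh : 0 < h) (W : Finset (Fin d → ℕ))
    (hW : W ⊆ grid n d) :
    ((W.card : ℝ)) ^ (h * k) / (((h * n + 1 : ℕ) : ℝ) ^ d) ^ (k - 1)
      ≤ ((tupleSet d k h W).card : ℝ) := by
  classical
  obtain ⟨m, rfl⟩ : ∃ m, k = m + 1 := ⟨k - 1, by omega⟩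
  rcases W.eq_empty_or_nonempty with rfl | ⟨w₀, hw₀⟩
  · have h0 : h * (m + 1) ≠ 0 := by positivity
    simp [zero_pow h0]
  · have hsumsne : (sumSet d h W).Nonempty := by
      refine ⟨∑ i, (fun _ : Fin h => w₀) i, Finset.mem_image_of_mem _ ?_⟩
      rw [Fintype.mem_piFinset]; exact fun _ => hw₀
    have hpm := pow_sum_div_card_le_sum_pow (s := sumSet d h W)
      (f := fun s => ((rowSet d h W s).card : ℝ)) (fun i _ => by positivity) m
    have hsumf : (∑ s ∈ sumSet d h W, ((rowSet d h W s).card : ℝ)) = (W.card : ℝ) ^ h := by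
      rw [show ((W.card : ℝ)) ^ h = ((W.card ^ h : ℕ) : ℝ) by push_cast; ring,
        ← sum_rowSet_card (d := d) h W]
      push_cast
      rfl
    have htup : ((tupleSet d (m+1) h W).card : ℝ)
        = ∑ s ∈ sumSet d h W, ((rowSet d h W s).card : ℝ) ^ (m + 1) := by
      rw [tuple_card_eq hk W]
      push_cast
      rfl
    rw [hsumf] at hpm
    rw [htup]
    refine le_trans ?_ hpm
    have hden1 : (0:ℝ) < ((sumSet d h W).card : ℝ) ^ m := by
      have := Finset.card_pos.mpr hsumsne
      positivity
    have hden2 : ((sumSet d h W).card : ℝ) ^ m ≤ (((h * n + 1 : ℕ) : ℝ) ^ d) ^ m := by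
      have hc := sumSet_card_le (d := d) h n W hW
      have : ((sumSet d h W).card : ℝ) ≤ ((h * n + 1 : ℕ) : ℝ) ^ d := by
        push_cast
        exact_mod_cast hc
      exact pow_le_pow_left₀ (by positivity) this m
    have hnum : ((W.card : ℝ)) ^ (h * (m + 1)) = ((W.card : ℝ) ^ h) ^ (m + 1) := by
      rw [← pow_mul]
    rw [hnum]
    simp only [Nat.add_sub_cancel]
    exact div_le_div_of_nonneg_left (by positivity) hden1 hden2

end Tuples
section Determination

open Finset

variable {d : ℕ}

lemma eq_of_sum_eq_of_ne {h : ℕ} {M : Type*} [AddCancelCommMonoid M] (f g : Fin h → M) (i : Fin h)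
    (hsum : ∑ x, f x = ∑ x, g x) (hoff : ∀ x, x ≠ i → f x = g x) : f i = g i := by
  classical
  rw [← Finset.sum_erase_add univ f (Finset.mem_univ i),
    ← Finset.sum_erase_add univ g (Finset.mem_univ i)] at hsum
  have hrest : ∑ x ∈ univ.erase i, f x = ∑ x ∈ univ.erase i, g x :=
    Finset.sum_congr rfl fun x hx => hoff x (Finset.ne_of_mem_erase hx)
  rw [hrest] at hsum
  exact add_left_cancel hsum

lemma eq_of_sum_eq_of_ne_pair {h : ℕ} (f g : Fin h → (Fin d → ℕ)) (i₁ i₂ : Fin h) (hne : i₁ ≠ i₂)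
    (hf : f i₁ = f i₂) (hgg : g i₁ = g i₂) (hsum : ∑ x, f x = ∑ x, g x)
    (hoff : ∀ x, x ≠ i₁ → x ≠ i₂ → f x = g x) : f i₁ = g i₁ := by
  classical
  have hi₂ : i₂ ∈ (univ : Finset (Fin h)).erase i₁ :=
    Finset.mem_erase.mpr ⟨hne.symm, Finset.mem_univ _⟩
  rw [← Finset.sum_erase_add univ f (Finset.mem_univ i₁),
    ← Finset.sum_erase_add univ g (Finset.mem_univ i₁),
    ← Finset.sum_erase_add _ f hi₂, ← Finset.sum_erase_add _ g hi₂] at hsum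
  have hrest : ∑ x ∈ (univ.erase i₁).erase i₂, f x = ∑ x ∈ (univ.erase i₁).erase i₂, g x :=
    Finset.sum_congr rfl fun x hx => hoff x
      (Finset.ne_of_mem_erase (Finset.mem_of_mem_erase hx)) (Finset.ne_of_mem_erase hx)
  rw [hrest, ← hf, ← hgg] at hsum
  have h2 : f i₁ + f i₁ = g i₁ + g i₁ := by
    rw [add_assoc, add_assoc] at hsum
    exact add_left_cancel hsum
  funext ℓ
  have h3 := congrFun h2 ℓ
  simp only [Pi.add_apply] at h3
  omega

lemma det_card_le {k h : ℕ} (hk : 0 < k) (hh : 0 < h) (W : Finset (Fin d → ℕ))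
    (S : Finset (Fin k → Fin h → (Fin d → ℕ)))
    (hmem : ∀ y ∈ S, ∀ j i, y j i ∈ W)
    (D : Finset (Fin k × Fin h)) (hD : k ≤ D.card)
    (hdet : ∀ y ∈ S, ∀ z ∈ S, (∀ q : Fin k × Fin h, q ∉ D → y q.1 q.2 = z q.1 q.2) → y = z) :
    S.card ≤ W.card ^ (k * h - k) := by
  classical
  rcases S.eq_empty_or_nonempty with rfl | ⟨y₀, hy₀⟩
  · simp
  obtain ⟨w₀, hw₀⟩ : W.Nonempty := ⟨y₀ ⟨0, hk⟩ ⟨0, hh⟩, hmem y₀ hy₀ _ _⟩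
  have hcardle := Finset.card_le_card_of_injOn
      (f := fun (y : Fin k → Fin h → (Fin d → ℕ)) (q : Fin k × Fin h) =>
        if q ∈ D then w₀ else y q.1 q.2)
      (t := Fintype.piFinset fun q : Fin k × Fin h => if q ∈ D then ({w₀} : Finset _) else W)
      (s := S) ?_ ?_
  · refine le_trans hcardle ?_
    rw [Fintype.card_piFinset]
    have hprodc : ∀ q : Fin k × Fin h,
        ((if q ∈ D then ({w₀} : Finset (Fin d → ℕ)) else W).card) = if q ∈ D then 1 else W.card := by
      intro q; split <;> simp
    rw [Finset.prod_congr rfl (fun q _ => hprodc q),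
      ← Finset.prod_filter_mul_prod_filter_not univ (fun q => q ∈ D)]
    have h1 : ∏ q ∈ univ.filter (fun q => q ∈ D), (if q ∈ D then 1 else W.card) = 1 := by
      refine Finset.prod_eq_one fun q hq => ?_
      rw [if_pos (Finset.mem_filter.mp hq).2]
    have h2 : ∏ q ∈ univ.filter (fun q => ¬ q ∈ D), (if q ∈ D then 1 else W.card)
        = W.card ^ (univ.filter (fun q => ¬ q ∈ D)).card := by
      rw [Finset.prod_congr rfl (fun q hq => if_neg (Finset.mem_filter.mp hq).2),
        Finset.prod_const]
    rw [h1, h2, one_mul]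
    have hfiltD : (univ.filter (fun q : Fin k × Fin h => q ∈ D)).card = D.card := by
      congr 1
      ext q
      simp
    have hsplit := Finset.card_filter_add_card_filter_not
      (s := (univ : Finset (Fin k × Fin h))) (p := fun q => q ∈ D)
    have huniv : (univ : Finset (Fin k × Fin h)).card = k * h := by
      simp [Finset.card_univ]
    refine Nat.pow_le_pow_right (Finset.card_pos.mpr ⟨w₀, hw₀⟩) ?_
    omega
  · intro y hy
    rw [Finset.mem_coe, Fintype.mem_piFinset]
    intro q
    by_cases hq : q ∈ D
    · simp [hq]
    · simp only [if_neg hq]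
      exact hmem y hy q.1 q.2
  · intro y hy z hz heq
    refine hdet y hy z hz fun q hq => ?_
    have := congrFun heq q
    simpa [if_neg hq] using this

end Determination
section BadTuples

open Finset

variable {d : ℕ}

lemma bad_card_le {k h : ℕ} (hk : 2 ≤ k) (hh : 2 ≤ h) (W : Finset (Fin d → ℕ))
    (p q : Fin k × Fin h) (hpq : p ≠ q) :
    ((tupleSet d k h W).filter (fun y => y p.1 p.2 = y q.1 q.2)).card
      ≤ W.card ^ (k * h - k) := by
  classical
  have hk0 : 0 < k := by omega
  have hh0 : 0 < h := by omega
  set i0 : Fin h := ⟨0, hh0⟩ with hi0def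
  set i1 : Fin h := ⟨1, by omega⟩ with hi1def
  set S := (tupleSet d k h W).filter (fun y => y p.1 p.2 = y q.1 q.2) with hSdef
  have hmem : ∀ y ∈ S, ∀ j i, y j i ∈ W := by
    intro y hy j i
    exact (mem_tupleSet_iff.mp (Finset.mem_filter.mp hy).1).1 j i
  have hTy : ∀ y ∈ S, ∀ j₁ j₂ : Fin k, ∑ i, y j₁ i = ∑ i, y j₂ i :=
    fun y hy => (mem_tupleSet_iff.mp (Finset.mem_filter.mp hy).1).2
  have hCo : ∀ y ∈ S, y p.1 p.2 = y q.1 q.2 := fun y hy => (Finset.mem_filter.mp hy).2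
  by_cases hg : p.1 = q.1
  · -- CASE B : same group
    have hne2 : p.2 ≠ q.2 := fun h2 => hpq (Prod.ext hg h2)
    set g' : Fin k := if p.1 = ⟨0, hk0⟩ then ⟨1, by omega⟩ else ⟨0, hk0⟩ with hg'def
    have hg'ne : g' ≠ p.1 := by
      rw [hg'def]
      split
      · rename_i hcase; rw [hcase]; simp [Fin.ext_iff]
      · rename_i hcase; exact fun hcontra => hcase hcontra.symm
    set D := (univ : Finset (Fin k × Fin h)).filter
      (fun z => (z = p ∨ z = q) ∨ (z.1 ≠ p.1 ∧ z.1 ≠ g' ∧ z.2 = i0)) with hDdef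
    have hmemD : ∀ z : Fin k × Fin h,
        z ∈ D ↔ ((z = p ∨ z = q) ∨ (z.1 ≠ p.1 ∧ z.1 ≠ g' ∧ z.2 = i0)) := by
      intro z; simp [hDdef]
    have hDcard : k ≤ D.card := by
      have hinj := Finset.card_le_card_of_injOn
        (f := fun j : Fin k => if j = p.1 then p else if j = g' then q else (j, i0))
        (s := (univ : Finset (Fin k))) (t := D) ?_ ?_
      · simpa using hinj
      · intro j _
        rw [Finset.mem_coe, hmemD]
        beta_reduce
        by_cases h1 : j = p.1
        · rw [if_pos h1]; exact Or.inl (Or.inl rfl)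
        · by_cases h2 : j = g'
          · rw [if_neg h1, if_pos h2]; exact Or.inl (Or.inr rfl)
          · rw [if_neg h1, if_neg h2]; exact Or.inr ⟨h1, h2, rfl⟩
      · intro j₁ hj₁ j₂ hj₂ hjeq
        simp only at hjeq
        by_cases a1 : j₁ = p.1 <;> by_cases a2 : j₂ = p.1
        · rw [a1, a2]
        · exfalso
          rw [if_pos a1, if_neg a2] at hjeq
          by_cases b2 : j₂ = g'
          · rw [if_pos b2] at hjeq; exact hpq hjeq
          · rw [if_neg b2] at hjeq
            exact a2 (congrArg Prod.fst hjeq).symm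
        · exfalso
          rw [if_neg a1, if_pos a2] at hjeq
          by_cases b1 : j₁ = g'
          · rw [if_pos b1] at hjeq; exact hpq hjeq.symm
          · rw [if_neg b1] at hjeq
            exact a1 (congrArg Prod.fst hjeq)
        · rw [if_neg a1, if_neg a2] at hjeq
          by_cases b1 : j₁ = g' <;> by_cases b2 : j₂ = g'
          · rw [b1, b2]
          · exfalso
            rw [if_pos b1, if_neg b2] at hjeq
            exact a2 ((congrArg Prod.fst hjeq).symm.trans hg.symm)
          · exfalso
            rw [if_neg b1, if_pos b2] at hjeq
            exact a1 ((congrArg Prod.fst hjeq).trans hg.symm)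
          · rw [if_neg b1, if_neg b2] at hjeq
            exact congrArg Prod.fst hjeq
    refine det_card_le hk0 hh0 W S hmem D hDcard ?_
    intro y hy z hz hagree
    have hrowg' : ∀ i, y g' i = z g' i := by
      intro i
      refine hagree (g', i) (fun hmemc => ?_)
      rcases (hmemD _).mp hmemc with (hc | hc) | ⟨_, hc2, _⟩
      · exact hg'ne (congrArg Prod.fst hc)
      · exact hg'ne ((congrArg Prod.fst hc).trans hg.symm)
      · exact hc2 rfl
    have hS' : ∀ j, ∑ i, y j i = ∑ i, z j i := by
      intro j
      calc ∑ i, y j i = ∑ i, y g' i := hTy y hy j g'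
        _ = ∑ i, z g' i := Finset.sum_congr rfl fun i _ => hrowg' i
        _ = ∑ i, z j i := hTy z hz g' j
    have hoffp : ∀ x : Fin h, x ≠ p.2 → x ≠ q.2 → y p.1 x = z p.1 x := by
      intro x hx1 hx2
      refine hagree (p.1, x) (fun hmemc => ?_)
      rcases (hmemD _).mp hmemc with (hc | hc) | ⟨hc1, _, _⟩
      · exact hx1 (congrArg Prod.snd hc)
      · exact hx2 (congrArg Prod.snd hc)
      · exact hc1 rfl
    have hfco : y p.1 p.2 = y p.1 q.2 := by
      have hx := hCo y hy; rw [← hg] at hx; exact hx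
    have hgco : z p.1 p.2 = z p.1 q.2 := by
      have hx := hCo z hz; rw [← hg] at hx; exact hx
    have hP : y p.1 p.2 = z p.1 p.2 :=
      eq_of_sum_eq_of_ne_pair (y p.1) (z p.1) p.2 q.2 hne2 hfco hgco (hS' p.1) hoffp
    have hQ : y q.1 q.2 = z q.1 q.2 :=
      ((hCo y hy).symm.trans hP).trans (hCo z hz)
    funext j i
    by_cases hjg' : j = g'
    · rw [hjg']; exact hrowg' i
    by_cases hjp : j = p.1
    · by_cases hip : i = p.2
      · rw [hjp, hip]; exact hP
      by_cases hiq : i = q.2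
      · rw [hjp, hiq, hg]; exact hQ
      · rw [hjp]; exact hoffp i hip hiq
    · by_cases hii0 : i = i0
      · refine eq_of_sum_eq_of_ne (y j) (z j) i (hS' j) ?_
        intro i' hi'
        refine hagree (j, i') (fun hmemc => ?_)
        rcases (hmemD _).mp hmemc with (hc | hc) | ⟨_, _, hc3⟩
        · exact hjp (congrArg Prod.fst hc)
        · exact hjp ((congrArg Prod.fst hc).trans hg.symm)
        · exact hi' (hc3.trans hii0.symm)
      · refine hagree (j, i) (fun hmemc => ?_)
        rcases (hmemD _).mp hmemc with (hc | hc) | ⟨_, _, hc3⟩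
        · exact hjp (congrArg Prod.fst hc)
        · exact hjp ((congrArg Prod.fst hc).trans hg.symm)
        · exact hii0 hc3
  · -- CASE A : different groups
    set dsel : Fin k → Fin h := fun j => if j = q.1 then (if q.2 = i0 then i1 else i0) else i0
      with hdseldef
    have hdselq : dsel q.1 ≠ q.2 := by
      rw [hdseldef]
      simp only [if_pos rfl]
      by_cases hc : q.2 = i0
      · rw [if_pos hc, hc]
        simp [hi0def, hi1def, Fin.ext_iff]
      · rw [if_neg hc]
        exact fun hcc => hc hcc.symm
    set D := (univ : Finset (Fin k × Fin h)).filter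
      (fun z => z = q ∨ (z.1 ≠ p.1 ∧ z.2 = dsel z.1)) with hDdef
    have hmemD : ∀ z : Fin k × Fin h,
        z ∈ D ↔ (z = q ∨ (z.1 ≠ p.1 ∧ z.2 = dsel z.1)) := by
      intro z; simp [hDdef]
    have hDcard : k ≤ D.card := by
      have hinj := Finset.card_le_card_of_injOn
        (f := fun j : Fin k => if j = p.1 then q else (j, dsel j))
        (s := (univ : Finset (Fin k))) (t := D) ?_ ?_
      · simpa using hinj
      · intro j _
        rw [Finset.mem_coe, hmemD]
        beta_reduce
        by_cases h1 : j = p.1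
        · rw [if_pos h1]; exact Or.inl rfl
        · rw [if_neg h1]; exact Or.inr ⟨h1, rfl⟩
      · intro j₁ hj₁ j₂ hj₂ hjeq
        simp only at hjeq
        by_cases a1 : j₁ = p.1 <;> by_cases a2 : j₂ = p.1
        · rw [a1, a2]
        · exfalso
          rw [if_pos a1, if_neg a2] at hjeq
          have hfst : q.1 = j₂ := congrArg Prod.fst hjeq
          have hsnd : q.2 = dsel j₂ := congrArg Prod.snd hjeq
          rw [← hfst] at hsnd
          exact hdselq hsnd.symm
        · exfalso
          rw [if_neg a1, if_pos a2] at hjeq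
          have hfst : j₁ = q.1 := congrArg Prod.fst hjeq
          have hsnd : dsel j₁ = q.2 := congrArg Prod.snd hjeq
          rw [hfst] at hsnd
          exact hdselq hsnd
        · rw [if_neg a1, if_neg a2] at hjeq
          exact congrArg Prod.fst hjeq
    refine det_card_le hk0 hh0 W S hmem D hDcard ?_
    intro y hy z hz hagree
    have hrowp : ∀ i, y p.1 i = z p.1 i := by
      intro i
      refine hagree (p.1, i) (fun hmemc => ?_)
      rcases (hmemD _).mp hmemc with hc | ⟨hc1, _⟩
      · rw [Prod.ext_iff] at hc; exact hg hc.1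
      · exact hc1 rfl
    have hS' : ∀ j, ∑ i, y j i = ∑ i, z j i := by
      intro j
      calc ∑ i, y j i = ∑ i, y p.1 i := hTy y hy j p.1
        _ = ∑ i, z p.1 i := Finset.sum_congr rfl fun i _ => hrowp i
        _ = ∑ i, z j i := hTy z hz p.1 j
    have hQ : y q.1 q.2 = z q.1 q.2 :=
      ((hCo y hy).symm.trans (hrowp p.2)).trans (hCo z hz)
    funext j i
    by_cases hjp : j = p.1
    · rw [hjp]; exact hrowp i
    by_cases hqq : (j, i) = q
    · have h1 : j = q.1 := congrArg Prod.fst hqq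
      have h2 : i = q.2 := congrArg Prod.snd hqq
      rw [h1, h2]; exact hQ
    by_cases hsel : i = dsel j
    · refine eq_of_sum_eq_of_ne (y j) (z j) i (hS' j) ?_
      intro i' hi'
      by_cases hq' : (j, i') = q
      · have h1 : j = q.1 := congrArg Prod.fst hq'
        have h2 : i' = q.2 := congrArg Prod.snd hq'
        rw [h1, h2]; exact hQ
      · refine hagree (j, i') (fun hmemc => ?_)
        rcases (hmemD _).mp hmemc with hc | ⟨_, hc2⟩
        · exact hq' hc
        · exact hi' (hc2.trans hsel.symm)
    · refine hagree (j, i) (fun hmemc => ?_)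
      rcases (hmemD _).mp hmemc with hc | ⟨_, hc2⟩
      · exact hqq hc
      · exact hsel hc2

end BadTuples
section SolSets

open Finset

variable {d : ℕ}

/-- Equal-sum tuples with pairwise distinct entries. -/
def goodSet (d k h : ℕ) (W : Finset (Fin d → ℕ)) : Finset (Fin k → Fin h → (Fin d → ℕ)) :=
  (tupleSet d k h W).filter
    (fun y => ∀ q₁ q₂ : Fin k × Fin h, y q₁.1 q₁.2 = y q₂.1 q₂.2 → q₁ = q₂)

/-- The solution sets arising from good tuples. -/
def solSets (d k h : ℕ) (W : Finset (Fin d → ℕ)) : Finset (Finset (Fin d → ℕ)) :=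
  (goodSet d k h W).image
    (fun y => (univ : Finset (Fin k × Fin h)).image (fun z => y z.1 z.2))

lemma tuple_le_good_add_bad {k h : ℕ} (hk : 2 ≤ k) (hh : 2 ≤ h) (W : Finset (Fin d → ℕ)) :
    (tupleSet d k h W).card
      ≤ (goodSet d k h W).card + (k * h) ^ 2 * W.card ^ (k * h - k) := by
  classical
  set pcond := fun y : Fin k → Fin h → (Fin d → ℕ) =>
    ∀ q₁ q₂ : Fin k × Fin h, y q₁.1 q₁.2 = y q₂.1 q₂.2 → q₁ = q₂ with hpcond
  have hsplit := Finset.card_filter_add_card_filter_not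
    (s := tupleSet d k h W) (p := pcond)
  set bp := (univ : Finset ((Fin k × Fin h) × (Fin k × Fin h))).filter
    (fun pq => pq.1 ≠ pq.2) with hbp
  have hsubset : (tupleSet d k h W).filter (fun y => ¬ pcond y)
      ⊆ bp.biUnion (fun pq => (tupleSet d k h W).filter
        (fun y => y pq.1.1 pq.1.2 = y pq.2.1 pq.2.2)) := by
    intro y hy
    rw [Finset.mem_filter] at hy
    obtain ⟨hyT, hyn⟩ := hy
    rw [hpcond] at hyn
    beta_reduce at hyn
    push_neg at hyn
    obtain ⟨q₁, q₂, heq, hne⟩ := hyn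
    exact Finset.mem_biUnion.mpr ⟨(q₁, q₂), by simp [hbp, hne],
      Finset.mem_filter.mpr ⟨hyT, heq⟩⟩
  have hbad : ((tupleSet d k h W).filter (fun y => ¬ pcond y)).card
      ≤ (k * h) ^ 2 * W.card ^ (k * h - k) := by
    refine le_trans (Finset.card_le_card hsubset) (le_trans Finset.card_biUnion_le ?_)
    have hsum := Finset.sum_le_card_nsmul bp
      (fun pq => ((tupleSet d k h W).filter
        (fun y => y pq.1.1 pq.1.2 = y pq.2.1 pq.2.2)).card)
      (W.card ^ (k * h - k))
      (fun pq hpq => bad_card_le hk hh W pq.1 pq.2 (Finset.mem_filter.mp hpq).2)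
    refine le_trans hsum ?_
    rw [smul_eq_mul]
    have hbpcard : bp.card ≤ (k * h) ^ 2 := by
      calc bp.card ≤ (univ : Finset ((Fin k × Fin h) × (Fin k × Fin h))).card :=
          Finset.card_filter_le _ _
        _ = (k * h) ^ 2 := by
          rw [Finset.card_univ]
          simp only [Fintype.card_prod, Fintype.card_fin]
          ring
    exact Nat.mul_le_mul_right _ hbpcard
  have : (goodSet d k h W).card = ((tupleSet d k h W).filter pcond).card := rfl
  omega

lemma good_le_sol {k h : ℕ} (W : Finset (Fin d → ℕ)) :
    (goodSet d k h W).card ≤ (k * h) ^ (k * h) * (solSets d k h W).card := by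
  classical
  have hgoal := Finset.card_le_mul_card_image (f := fun y : Fin k → Fin h → (Fin d → ℕ) =>
    (univ : Finset (Fin k × Fin h)).image (fun z => y z.1 z.2))
    (goodSet d k h W) ((k * h) ^ (k * h))
  refine (fun hfib => le_trans (hgoal hfib) (le_of_eq rfl)) ?_
  intro X hX
  obtain ⟨y₀, hy₀, hXy₀⟩ := Finset.mem_image.mp hX
  have hXcard : X.card = k * h := by
    rw [← hXy₀]
    rw [Finset.card_image_of_injOn]
    · simp [Finset.card_univ]
    · intro z₁ hz₁ z₂ hz₂ hzz
      exact (Finset.mem_filter.mp hy₀).2 z₁ z₂ hzz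
  have hsub : (goodSet d k h W).filter
      (fun y => (univ : Finset (Fin k × Fin h)).image (fun z => y z.1 z.2) = X)
      ⊆ Fintype.piFinset (fun _ : Fin k => Fintype.piFinset (fun _ : Fin h => X)) := by
    intro y hy
    rw [Finset.mem_filter] at hy
    rw [Fintype.mem_piFinset]
    intro j
    rw [Fintype.mem_piFinset]
    intro i
    rw [← hy.2]
    exact Finset.mem_image.mpr ⟨(j, i), Finset.mem_univ _, rfl⟩
  calc ((goodSet d k h W).filter _).card
      ≤ (Fintype.piFinset (fun _ : Fin k => Fintype.piFinset (fun _ : Fin h => X))).card :=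
        Finset.card_le_card hsub
    _ = (k * h) ^ (k * h) := by
        rw [Fintype.card_piFinset]
        simp [Fintype.card_piFinset, hXcard, Finset.prod_const, ← pow_mul, mul_comm]

lemma solSets_prop {k h : ℕ} (W : Finset (Fin d → ℕ)) (X : Finset (Fin d → ℕ))
    (hX : X ∈ solSets d k h W) : X ⊆ W ∧ IsBkhSol d k h X := by
  classical
  obtain ⟨y, hy, rfl⟩ := Finset.mem_image.mp hX
  rw [goodSet, Finset.mem_filter] at hy
  obtain ⟨hyT, hyinj⟩ := hy
  rw [mem_tupleSet_iff] at hyT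
  obtain ⟨hymem, hysum⟩ := hyT
  constructor
  · intro v hv
    obtain ⟨z, _, rfl⟩ := Finset.mem_image.mp hv
    exact hymem z.1 z.2
  · constructor
    · rw [Finset.card_image_of_injOn (fun z₁ _ z₂ _ hzz => hyinj z₁ z₂ hzz)]
      simp [Finset.card_univ]
    · refine ⟨fun ℓ => (univ : Finset (Fin h)).image (fun i => y ℓ i), ?_, ?_, ?_, ?_⟩
      · intro ℓ
        rw [Finset.card_image_of_injOn]
        · simp
        · intro i₁ _ i₂ _ hii
          have := hyinj (ℓ, i₁) (ℓ, i₂) hii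
          exact congrArg Prod.snd this
      · intro ℓ₁ ℓ₂ hll
        rw [Finset.disjoint_left]
        intro v hv₁ hv₂
        obtain ⟨i₁, _, hi₁⟩ := Finset.mem_image.mp hv₁
        obtain ⟨i₂, _, hi₂⟩ := Finset.mem_image.mp hv₂
        have := hyinj (ℓ₁, i₁) (ℓ₂, i₂) (hi₁.trans hi₂.symm)
        exact hll (congrArg Prod.fst this)
      · ext v
        simp only [Finset.mem_biUnion, Finset.mem_image, Finset.mem_univ, true_and]
        constructor
        · rintro ⟨ℓ, ⟨i, hi⟩⟩
          exact ⟨(ℓ, i), hi⟩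
        · rintro ⟨z, hz⟩
          exact ⟨z.1, z.2, hz⟩
      · intro ℓ₁ ℓ₂
        rw [Finset.sum_image (fun i₁ _ i₂ _ hii =>
            congrArg Prod.snd (hyinj (ℓ₁, i₁) (ℓ₁, i₂) hii)),
          Finset.sum_image (fun i₁ _ i₂ _ hii =>
            congrArg Prod.snd (hyinj (ℓ₂, i₁) (ℓ₂, i₂) hii))]
        simpa using hysum ℓ₁ ℓ₂

lemma solSets_card_le_rainbowCount {k h r : ℕ} (hr0 : 0 < r) (A : Finset (Fin d → ℕ))
    (P : (Fin d → ℕ) → Finset (Fin r)) :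
    (solSets d k h (A.filter (fun x => k * h ≤ (P x).card))).card
      ≤ rainbowCount d k h r A P := by
  classical
  haveI := finite_rainbowsub (d := d) (k := k) (h := h) A P
  set W := A.filter (fun x => k * h ≤ (P x).card) with hW
  set Φ : Finset (Fin d → ℕ) → Finset ((Fin d → ℕ) × Fin r) := fun X =>
    if hX : ∀ x ∈ X, X.card ≤ (P x).card then
      X.image (fun v => (v, (exists_rainbow_assignment hr0 X P hX).choose v))
    else ∅ with hΦ
  have hkey : ∀ X ∈ solSets d k h W, (Φ X).image Prod.fst = X
      ∧ IsRainbowSub d k h r A P (Φ X) := by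
    intro X hXmem
    obtain ⟨hXW, hXsol⟩ := solSets_prop W X hXmem
    have hX : ∀ x ∈ X, X.card ≤ (P x).card := by
      intro x hx
      have hxW := hXW hx
      rw [hW, Finset.mem_filter] at hxW
      rw [hXsol.1]
      exact hxW.2
    have hΦX : Φ X = X.image
        (fun v => (v, (exists_rainbow_assignment hr0 X P hX).choose v)) := by
      rw [hΦ]; exact dif_pos hX
    obtain ⟨finj, fmem⟩ := (exists_rainbow_assignment hr0 X P hX).choose_spec
    set f := (exists_rainbow_assignment hr0 X P hX).choose
    have himg : (Φ X).image Prod.fst = X := by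
      rw [hΦX, Finset.image_image]
      simp [Function.comp_def]
    refine ⟨himg, ?_, ?_, ?_, ?_, ?_⟩
    · intro s₁ hs₁ s₂ hs₂ heq
      rw [hΦX] at hs₁ hs₂
      obtain ⟨v₁, _, rfl⟩ := Finset.mem_image.mp hs₁
      obtain ⟨v₂, _, rfl⟩ := Finset.mem_image.mp hs₂
      simp only at heq
      rw [heq]
    · intro s₁ hs₁ s₂ hs₂ heq
      rw [hΦX] at hs₁ hs₂
      obtain ⟨v₁, hv₁, rfl⟩ := Finset.mem_image.mp hs₁
      obtain ⟨v₂, hv₂, rfl⟩ := Finset.mem_image.mp hs₂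
      simp only at heq
      rw [finj (Finset.mem_coe.mpr hv₁) (Finset.mem_coe.mpr hv₂) heq]
    · rw [himg]
      exact le_trans hXW (Finset.filter_subset _ A)
    · rw [himg]; exact hXsol
    · intro pr hpr
      rw [hΦX] at hpr
      obtain ⟨v, hv, rfl⟩ := Finset.mem_image.mp hpr
      exact fmem v hv
  have hinj : Set.InjOn Φ ↑(solSets d k h W) := by
    intro X₁ hX₁ X₂ hX₂ hXX
    rw [← (hkey X₁ (Finset.mem_coe.mp hX₁)).1, ← (hkey X₂ (Finset.mem_coe.mp hX₂)).1, hXX]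
  calc (solSets d k h W).card = ((solSets d k h W).image Φ).card :=
      (Finset.card_image_of_injOn hinj).symm
    _ ≤ Nat.card {S : Finset ((Fin d → ℕ) × Fin r) // IsRainbowSub d k h r A P S} := by
      refine card_le_natCard _ _ ?_
      intro S hS
      obtain ⟨X, hX, rfl⟩ := Finset.mem_image.mp hS
      exact (hkey X hX).2
    _ = rainbowCount d k h r A P := rfl

end SolSets

section Colorings

open Finset

variable {d k h r : ℕ}

lemma count_sub_le_prod (A : Finset (Fin d → ℕ)) (P : (Fin d → ℕ) → Finset (Fin r)) :
    ((Finset.univ : Finset (↥A → Fin r)).filter (fun c => ∀ x : ↥A, c x ∈ P x.val)).card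
      ≤ ∏ x ∈ A, (P x).card := by
  classical
  rw [← Fintype.card_subtype]
  have hinj : Fintype.card {c : ↥A → Fin r // ∀ x : ↥A, c x ∈ P x.val}
      ≤ Fintype.card (∀ x : ↥A, ↥(P x.val)) :=
    Fintype.card_le_of_injective (fun c x => ⟨c.1 x, c.2 x⟩)
      (fun c c' hcc => Subtype.ext (funext fun x =>
        congrArg Subtype.val (congrFun hcc x)))
  refine le_trans hinj ?_
  rw [Fintype.card_pi]
  have h1 : ∀ x : ↥A, Fintype.card ↥(P x.val) = (P x.val).card :=
    fun x => Fintype.card_coe _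
  rw [Finset.prod_congr rfl (fun x _ => h1 x)]
  rw [Finset.univ_eq_attach, Finset.prod_attach A (fun x => (P x).card)]

lemma main_count_le (A : Finset (Fin d → ℕ)) (𝒟 : Finset ((Fin d → ℕ) → Finset (Fin r))) :
    Nat.card {c' : ↥A → Fin r // ¬ HasRainbow d k h r A c' ∧
        ∃ P ∈ 𝒟, ∀ x : ↥A, c' x ∈ P x.val}
      ≤ ∑ P ∈ 𝒟, ∏ x ∈ A, (P x).card := by
  classical
  set U := 𝒟.biUnion (fun P => (Finset.univ : Finset (↥A → Fin r)).filter
    (fun c => ∀ x : ↥A, c x ∈ P x.val)) with hU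
  have h1 : Nat.card {c' : ↥A → Fin r // ¬ HasRainbow d k h r A c' ∧
      ∃ P ∈ 𝒟, ∀ x : ↥A, c' x ∈ P x.val} ≤ U.card := by
    rw [← Nat.card_eq_finsetCard]
    refine Nat.card_le_card_of_injective (fun c => ⟨c.1, ?_⟩) ?_
    · obtain ⟨P, hP, hsub⟩ := c.2.2
      exact Finset.mem_biUnion.mpr ⟨P, hP, Finset.mem_filter.mpr ⟨Finset.mem_univ _, hsub⟩⟩
    · intro c c' hcc
      exact Subtype.ext (by simpa using congrArg Subtype.val hcc)
  refine le_trans h1 (le_trans Finset.card_biUnion_le ?_)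
  exact Finset.sum_le_sum (fun P _ => count_sub_le_prod A P)

end Colorings
section ProdBound

open Finset

variable {d k h r : ℕ}

lemma prod_palette_bound (hkh4 : 4 ≤ k * h) (hrkh : k * h ≤ r) (A : Finset (Fin d → ℕ))
    (P : (Fin d → ℕ) → Finset (Fin r)) :
    (∏ x ∈ A, ((P x).card : ℝ))
      ≤ ((k : ℝ) * h - 1) ^ A.card
        * (((k : ℝ) * h - 2) / ((k : ℝ) * h - 1))
            ^ ((A.filter fun x => (P x).card ≤ k * h - 2).card)
        * ((r : ℝ) / ((k : ℝ) * h - 1))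
            ^ ((A.filter fun x => k * h ≤ (P x).card).card) := by
  classical
  set KH : ℝ := (k : ℝ) * h with hKH
  have hKH4 : (4 : ℝ) ≤ KH := by
    rw [hKH]
    calc (4:ℝ) = ((4:ℕ):ℝ) := by norm_num
      _ ≤ ((k*h : ℕ):ℝ) := by exact_mod_cast hkh4
      _ = (k:ℝ) * h := by push_cast; ring
  have hKH1 : (0:ℝ) < KH - 1 := by linarith
  have hKH2 : (0:ℝ) < KH - 2 := by linarith
  set p1 := fun x : Fin d → ℕ => (P x).card ≤ k * h - 2 with hp1
  set p2 := fun x : Fin d → ℕ => k * h ≤ (P x).card with hp2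
  set B := A.filter p1 with hB
  set C := (A.filter fun x => ¬ p1 x).filter p2 with hC
  set Rst := (A.filter fun x => ¬ p1 x).filter (fun x => ¬ p2 x) with hRst
  have hsplit1 : (∏ x ∈ A, ((P x).card : ℝ))
      = (∏ x ∈ B, ((P x).card : ℝ)) * ((∏ x ∈ C, ((P x).card : ℝ))
        * (∏ x ∈ Rst, ((P x).card : ℝ))) := by
    rw [hB, hC, hRst,
      Finset.prod_filter_mul_prod_filter_not (A.filter fun x => ¬ p1 x) p2,
      Finset.prod_filter_mul_prod_filter_not A p1]
  have hcards : B.card + (C.card + Rst.card) = A.card := by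
    rw [hB, hC, hRst, Finset.card_filter_add_card_filter_not,
      Finset.card_filter_add_card_filter_not]
  have hBle : (∏ x ∈ B, ((P x).card : ℝ)) ≤ (KH - 2) ^ B.card := by
    rw [← Finset.prod_const]
    refine Finset.prod_le_prod (fun x _ => by positivity) ?_
    intro x hx
    have hx2 := (Finset.mem_filter.mp hx).2
    rw [hp1] at hx2
    have : ((P x).card : ℝ) ≤ ((k*h - 2 : ℕ) : ℝ) := by exact_mod_cast hx2
    refine le_trans this ?_
    rw [Nat.cast_sub (by omega)]
    push_cast
    rw [hKH]
  have hCle : (∏ x ∈ C, ((P x).card : ℝ)) ≤ (r : ℝ) ^ C.card := by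
    rw [← Finset.prod_const]
    refine Finset.prod_le_prod (fun x _ => by positivity) ?_
    intro x _
    have : (P x).card ≤ r := le_trans (Finset.card_le_univ _) (by simp)
    exact_mod_cast this
  have hRle : (∏ x ∈ Rst, ((P x).card : ℝ)) ≤ (KH - 1) ^ Rst.card := by
    rw [← Finset.prod_const]
    refine Finset.prod_le_prod (fun x _ => by positivity) ?_
    intro x hx
    have hx1 := (Finset.mem_filter.mp (Finset.mem_filter.mp hx).1).2
    have hx2 := (Finset.mem_filter.mp hx).2
    rw [hp1] at hx1; rw [hp2] at hx2
    push_neg at hx1 hx2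
    have hle : (P x).card ≤ k * h - 1 := by omega
    have : ((P x).card : ℝ) ≤ ((k*h - 1 : ℕ) : ℝ) := by exact_mod_cast hle
    refine le_trans this ?_
    rw [Nat.cast_sub (by omega)]
    push_cast
    rw [hKH]
  have hC_sub : C ⊆ A.filter p2 := by
    rw [hC]
    intro x hx
    rw [Finset.mem_filter] at hx ⊢
    exact ⟨(Finset.mem_filter.mp hx.1).1, hx.2⟩
  have hCw : C.card ≤ (A.filter p2).card := Finset.card_le_card hC_sub
  have hrKH : KH ≤ (r:ℝ) := by
    rw [hKH]
    calc (k:ℝ) * h = ((k*h : ℕ):ℝ) := by push_cast; ring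
      _ ≤ (r:ℝ) := by exact_mod_cast hrkh
  have hρ1 : (1:ℝ) ≤ (r:ℝ) / (KH - 1) := by
    rw [le_div_iff₀ hKH1]
    linarith
  -- rewrite the factor bounds using θ, ρ
  have hθ : KH - 2 = (KH - 1) * ((KH - 2) / (KH - 1)) := by
    field_simp
  have hρ : (r : ℝ) = (KH - 1) * ((r:ℝ) / (KH - 1)) := by
    field_simp
  calc (∏ x ∈ A, ((P x).card : ℝ))
      = (∏ x ∈ B, ((P x).card : ℝ)) * ((∏ x ∈ C, ((P x).card : ℝ))
        * (∏ x ∈ Rst, ((P x).card : ℝ))) := hsplit1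
    _ ≤ (KH - 2) ^ B.card * ((r:ℝ) ^ C.card * (KH - 1) ^ Rst.card) := by
        refine mul_le_mul hBle (mul_le_mul hCle hRle (Finset.prod_nonneg fun _ _ => Nat.cast_nonneg _) (by positivity))
          (mul_nonneg (Finset.prod_nonneg fun _ _ => Nat.cast_nonneg _) (Finset.prod_nonneg fun _ _ => Nat.cast_nonneg _)) (by positivity)
    _ = ((KH - 1) * ((KH - 2)/(KH - 1))) ^ B.card
        * ((((KH - 1) * ((r:ℝ)/(KH - 1)))) ^ C.card * (KH - 1) ^ Rst.card) := by
        rw [← hθ, ← hρ]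
    _ = (KH - 1) ^ (B.card + (C.card + Rst.card))
        * ((KH - 2)/(KH-1)) ^ B.card * ((r:ℝ)/(KH-1)) ^ C.card := by
        rw [mul_pow, mul_pow, pow_add, pow_add]
        ring
    _ ≤ (KH - 1) ^ A.card * ((KH - 2)/(KH-1)) ^ B.card
        * ((r:ℝ)/(KH-1)) ^ ((A.filter p2).card) := by
        rw [hcards]
        exact mul_le_mul_of_nonneg_left (pow_le_pow_right₀ hρ1 hCw) (by positivity)
  
end ProdBound

section Eventual

open Filter Real

lemma ev_logpow_le_rpow (C : ℝ) (hC : 0 < C) (m : ℕ) (s : ℝ) (hs : 0 < s) :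
    ∀ᶠ x : ℝ in atTop, (Real.logb 2 x) ^ m ≤ C * x ^ s := by
  have ho := isLittleO_log_rpow_rpow_atTop (s := s) (m : ℝ) hs
  have hband := ho.def (c := C * (Real.log 2) ^ m)
    (by positivity)
  filter_upwards [hband, eventually_ge_atTop (1:ℝ)] with x hx hx1
  have hlx : 0 ≤ Real.log x := Real.log_nonneg hx1
  have hxs : (0:ℝ) ≤ x ^ s := Real.rpow_nonneg (by linarith) s
  rw [Real.norm_eq_abs, Real.norm_eq_abs, abs_of_nonneg (Real.rpow_nonneg hlx _),
    abs_of_nonneg hxs, Real.rpow_natCast] at hx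
  have hlog2 : (0:ℝ) < Real.log 2 := Real.log_pos (by norm_num)
  rw [Real.logb, div_pow, div_le_iff₀ (by positivity)]
  calc Real.log x ^ m ≤ C * Real.log 2 ^ m * x ^ s := hx
    _ = C * x ^ s * Real.log 2 ^ m := by ring

end Eventual
section Identities

lemma idA (k h : ℕ) (hk : 2 ≤ k) (hh : 2 ≤ h) : h * k = (k * (h - 1) + 1) + (k - 1) := by
  obtain ⟨e, rfl⟩ : ∃ e, h = e + 2 := ⟨h - 2, by omega⟩
  obtain ⟨f, rfl⟩ : ∃ f, k = f + 2 := ⟨k - 2, by omega⟩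
  have h1 : (e + 2) - 1 = e + 1 := by omega
  have h2 : (f + 2) - 1 = f + 1 := by omega
  rw [h1, h2]
  ring

lemma idB (k h : ℕ) (hk : 2 ≤ k) (hh : 2 ≤ h) : (k * h - k) + k = h * k := by
  obtain ⟨e, rfl⟩ : ∃ e, h = e + 2 := ⟨h - 2, by omega⟩
  obtain ⟨f, rfl⟩ : ∃ f, k = f + 2 := ⟨k - 2, by omega⟩
  have h3 : (f + 2) * (e + 2) = (f + 2) * (e + 1) + (f + 2) := by ring
  rw [h3, Nat.add_sub_cancel]
  ring

lemma idC (k h : ℕ) (hk : 2 ≤ k) (hh : 2 ≤ h) :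
    4 * (k * (h - 1) + 1) + 5 * (k - 1) + (k * h - k + 1) = 5 * k * h := by
  obtain ⟨e, rfl⟩ : ∃ e, h = e + 2 := ⟨h - 2, by omega⟩
  obtain ⟨f, rfl⟩ : ∃ f, k = f + 2 := ⟨k - 2, by omega⟩
  have h1 : (e + 2) - 1 = e + 1 := by omega
  have h2 : (f + 2) - 1 = f + 1 := by omega
  have h3 : (f + 2) * (e + 2) - (f + 2) = (f + 2) * (e + 1) := by
    have h4 : (f + 2) * (e + 2) = (f + 2) * (e + 1) + (f + 2) := by ring
    rw [h4, Nat.add_sub_cancel]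
  rw [h1, h2, h3]
  ring

lemma idD (d k : ℕ) (hk : 2 ≤ k) : d * (k - 1) + d = d * k := by
  obtain ⟨f, rfl⟩ : ∃ f, k = f + 2 := ⟨k - 2, by omega⟩
  have h2 : (f + 2) - 1 = f + 1 := by omega
  rw [h2]
  ring

end Identities
section WBound

open Finset

set_option maxHeartbeats 2000000 in
lemma filter_large_palette_bound {d k h r n : ℕ} (hd : 1 ≤ d) (hk : 2 ≤ k) (hh : 2 ≤ h)
    (hr : k * h ≤ r)
    (A : Finset (Fin d → ℕ)) (hA : A ⊆ grid n d)
    (P : (Fin d → ℕ) → Finset (Fin r))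
    (hRub : (rainbowCount d k h r A P : ℝ)
      ≤ (A.card : ℝ) ^ (k * (h - 1) + 1) / (Real.logb 2 n) ^ (5 * k * h))
    (hAcard : (n : ℝ) ^ d / Real.logb 2 n ≤ (A.card : ℝ))
    (hn2 : 2 ≤ n)
    (hP2 : (Real.logb 2 (n : ℝ)) ^ (5 * k)
      ≤ (1 / (2 * ((k : ℝ) * h) ^ 2 * ((h : ℝ) + 1) ^ (d * (k - 1)))) * (n : ℝ) ^ (1 : ℝ))
    (hP3 : 2 * ((k : ℝ) * h) ^ (k * h) * ((h : ℝ) + 1) ^ (d * (k - 1)) + 1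
      ≤ Real.logb 2 (n : ℝ)) :
    ((A.filter fun x => k * h ≤ (P x).card).card : ℝ)
      ≤ (A.card : ℝ) / (Real.logb 2 n) ^ 4 := by
  classical
  set L := Real.logb 2 (n : ℝ) with hLdef
  set a := (A.card : ℝ) with hadef
  have hkh4 : 4 ≤ k * h := le_trans (by norm_num) (Nat.mul_le_mul hk hh)
  have hKH4 : (4 : ℝ) ≤ (k : ℝ) * h := by
    calc (4 : ℝ) = ((4 : ℕ) : ℝ) := by norm_num
      _ ≤ ((k * h : ℕ) : ℝ) := by exact_mod_cast hkh4
      _ = (k : ℝ) * h := by push_cast; ring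
  have hKH0 : (0 : ℝ) < (k : ℝ) * h := by linarith
  have hC₄0 : (0 : ℝ) ≤ 2 * ((k : ℝ) * h) ^ (k * h) * ((h : ℝ) + 1) ^ (d * (k - 1)) := by
    positivity
  have hL1 : (1 : ℝ) ≤ L := by linarith
  have hL0 : (0 : ℝ) < L := by linarith
  have hn0 : (0 : ℝ) < (n : ℝ) := by exact_mod_cast (by omega : 0 < n)
  have hn1 : (1 : ℝ) ≤ (n : ℝ) := by exact_mod_cast (by omega : 1 ≤ n)
  have ha0 : (0 : ℝ) < a := lt_of_lt_of_le (by positivity) hAcard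
  by_contra hcon
  push_neg at hcon
  set W := A.filter (fun x => k * h ≤ (P x).card) with hWdef
  set w := (W.card : ℝ) with hwdef
  have hWgrid : W ⊆ grid n d := fun x hx => hA (Finset.filter_subset _ A hx)
  have hwn : (n : ℝ) ^ d / L ^ 5 ≤ w := by
    have h1 : (n : ℝ) ^ d / L ^ 5 = ((n : ℝ) ^ d / L) / L ^ 4 := by ring
    rw [h1]
    refine le_trans ?_ (le_of_lt hcon)
    gcongr
  have hw0 : (0 : ℝ) < w := lt_of_lt_of_le (by positivity) hwn
  have hr0 : 0 < r := by omega
  have cNat : (tupleSet d k h W).card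
      ≤ (k * h) ^ (k * h) * rainbowCount d k h r A P + (k * h) ^ 2 * W.card ^ (k * h - k) := by
    refine le_trans (tuple_le_good_add_bad hk hh W) ?_
    refine Nat.add_le_add_right ?_ _
    refine le_trans (good_le_sol (k := k) (h := h) W) ?_
    exact Nat.mul_le_mul_left _ (solSets_card_le_rainbowCount hr0 A P)
  have c4 := tuple_lower (d := d) (n := n) (by omega : 0 < k) (by omega : 0 < h) W hWgrid
  set T : ℝ := (((h * n + 1 : ℕ)) : ℝ) ^ d with hTdef
  have hT0 : (0 : ℝ) < T := by rw [hTdef]; positivity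
  have hTub : T ≤ (((h : ℝ) + 1) ^ d) * ((n : ℝ) ^ d) := by
    rw [hTdef, ← mul_pow]
    refine pow_le_pow_left₀ (by positivity) ?_ d
    push_cast
    nlinarith [hn1, Nat.cast_nonneg (α := ℝ) h]
  have hmainR : w ^ (h * k) / T ^ (k - 1)
      ≤ ((k : ℝ) * h) ^ (k * h) * (rainbowCount d k h r A P : ℝ)
        + ((k : ℝ) * h) ^ 2 * w ^ (k * h - k) := by
    refine le_trans c4 ?_
    calc ((tupleSet d k h W).card : ℝ)
        ≤ (((k * h) ^ (k * h) * rainbowCount d k h r A P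
            + (k * h) ^ 2 * W.card ^ (k * h - k) : ℕ) : ℝ) := by exact_mod_cast cNat
      _ = ((k : ℝ) * h) ^ (k * h) * (rainbowCount d k h r A P : ℝ)
            + ((k : ℝ) * h) ^ 2 * w ^ (k * h - k) := by
          rw [hwdef]
          push_cast
          ring
  have hC₃pos : (0 : ℝ) < 2 * ((k : ℝ) * h) ^ 2 * ((h : ℝ) + 1) ^ (d * (k - 1)) := by
    positivity
  have hstep1 : (2 * ((k : ℝ) * h) ^ 2 * ((h : ℝ) + 1) ^ (d * (k - 1))) * L ^ (5 * k)
      ≤ (n : ℝ) ^ d := by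
    have h2 := hP2
    rw [Real.rpow_one] at h2
    calc (2 * ((k : ℝ) * h) ^ 2 * ((h : ℝ) + 1) ^ (d * (k - 1))) * L ^ (5 * k)
        ≤ (2 * ((k : ℝ) * h) ^ 2 * ((h : ℝ) + 1) ^ (d * (k - 1)))
          * ((1 / (2 * ((k : ℝ) * h) ^ 2 * ((h : ℝ) + 1) ^ (d * (k - 1)))) * n) :=
          mul_le_mul_of_nonneg_left h2 (le_of_lt hC₃pos)
      _ = (n : ℝ) := by field_simp
      _ ≤ (n : ℝ) ^ d := by
          calc (n : ℝ) = (n : ℝ) ^ 1 := (pow_one _).symm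
            _ ≤ (n : ℝ) ^ d := pow_le_pow_right₀ hn1 hd
  have hTk : T ^ (k - 1) ≤ ((h : ℝ) + 1) ^ (d * (k - 1)) * (n : ℝ) ^ (d * (k - 1)) := by
    calc T ^ (k - 1) ≤ ((((h : ℝ) + 1) ^ d) * ((n : ℝ) ^ d)) ^ (k - 1) :=
        pow_le_pow_left₀ (le_of_lt hT0) hTub _
      _ = _ := by rw [mul_pow, ← pow_mul, ← pow_mul]
  have hwk : 2 * ((k : ℝ) * h) ^ 2 * T ^ (k - 1) ≤ w ^ k := by
    have hbig : 2 * ((k : ℝ) * h) ^ 2 * T ^ (k - 1) * L ^ (5 * k) ≤ ((n : ℝ) ^ d) ^ k := by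
      calc 2 * ((k : ℝ) * h) ^ 2 * T ^ (k - 1) * L ^ (5 * k)
          ≤ 2 * ((k : ℝ) * h) ^ 2
              * (((h : ℝ) + 1) ^ (d * (k - 1)) * (n : ℝ) ^ (d * (k - 1))) * L ^ (5 * k) := by
            gcongr
        _ = (n : ℝ) ^ (d * (k - 1))
              * ((2 * ((k : ℝ) * h) ^ 2 * ((h : ℝ) + 1) ^ (d * (k - 1))) * L ^ (5 * k)) := by
            ring
        _ ≤ (n : ℝ) ^ (d * (k - 1)) * (n : ℝ) ^ d := by
            exact mul_le_mul_of_nonneg_left hstep1 (by positivity)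
        _ = ((n : ℝ) ^ d) ^ k := by
            rw [← pow_add, idD d k hk, pow_mul]
    have hwk1 : ((n : ℝ) ^ d) ^ k / L ^ (5 * k) ≤ w ^ k := by
      have hstep : ((n : ℝ) ^ d / L ^ 5) ^ k ≤ w ^ k := pow_le_pow_left₀ (by positivity) hwn k
      have heq : ((n : ℝ) ^ d) ^ k / L ^ (5 * k) = ((n : ℝ) ^ d / L ^ 5) ^ k := by
        rw [div_pow, ← pow_mul, pow_mul L 5 k]
      rw [heq]
      exact hstep
    calc 2 * ((k : ℝ) * h) ^ 2 * T ^ (k - 1)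
        = (2 * ((k : ℝ) * h) ^ 2 * T ^ (k - 1) * L ^ (5 * k)) / L ^ (5 * k) := by
          field_simp
      _ ≤ ((n : ℝ) ^ d) ^ k / L ^ (5 * k) := by gcongr
      _ ≤ w ^ k := hwk1
  have habs : ((k : ℝ) * h) ^ 2 * w ^ (k * h - k) ≤ (1 / 2) * (w ^ (h * k) / T ^ (k - 1)) := by
    have hsplit : w ^ (h * k) = w ^ (k * h - k) * w ^ k := by rw [← pow_add, idB k h hk hh]
    have h2 : 2 * ((k : ℝ) * h) ^ 2 ≤ w ^ k / T ^ (k - 1) := (le_div_iff₀ (by positivity)).mpr hwk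
    calc ((k : ℝ) * h) ^ 2 * w ^ (k * h - k)
        = w ^ (k * h - k) * ((2 * ((k : ℝ) * h) ^ 2) / 2) := by ring
      _ ≤ w ^ (k * h - k) * ((w ^ k / T ^ (k - 1)) / 2) := by gcongr
      _ = (1 / 2) * (w ^ (h * k) / T ^ (k - 1)) := by rw [hsplit]; ring
  have hhalf : (1 / 2) * (w ^ (h * k) / T ^ (k - 1))
      ≤ ((k : ℝ) * h) ^ (k * h) * (rainbowCount d k h r A P : ℝ) := by
    linarith [hmainR, habs]
  have hLB : a ^ (k * (h - 1) + 1)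
      / (2 * L ^ (4 * (k * (h - 1) + 1) + 5 * (k - 1)) * (((h : ℝ) + 1) ^ d) ^ (k - 1))
      ≤ (1 / 2) * (w ^ (h * k) / T ^ (k - 1)) := by
    have hsplit2 : w ^ (h * k) = w ^ (k * (h - 1) + 1) * w ^ (k - 1) := by
      rw [← pow_add, ← idA k h hk hh]
    have hwK : (a / L ^ 4) ^ (k * (h - 1) + 1) ≤ w ^ (k * (h - 1) + 1) :=
      pow_le_pow_left₀ (by positivity) (le_of_lt hcon) _
    have hwT : (1 / (((h : ℝ) + 1) ^ d * L ^ 5)) ^ (k - 1) ≤ (w / T) ^ (k - 1) := by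
      refine pow_le_pow_left₀ (by positivity) ?_ _
      rw [div_le_div_iff₀ (by positivity) hT0]
      calc 1 * T ≤ ((h : ℝ) + 1) ^ d * (n : ℝ) ^ d := by rw [one_mul]; exact hTub
        _ ≤ ((h : ℝ) + 1) ^ d * (w * L ^ 5) := by
            refine mul_le_mul_of_nonneg_left ?_ (by positivity)
            exact (div_le_iff₀ (by positivity)).mp hwn
        _ = w * (((h : ℝ) + 1) ^ d * L ^ 5) := by ring
    calc a ^ (k * (h - 1) + 1)
        / (2 * L ^ (4 * (k * (h - 1) + 1) + 5 * (k - 1)) * (((h : ℝ) + 1) ^ d) ^ (k - 1))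
        = (1 / 2) * ((a / L ^ 4) ^ (k * (h - 1) + 1)
          * (1 / (((h : ℝ) + 1) ^ d * L ^ 5)) ^ (k - 1)) := by
          have hLne : L ≠ 0 := ne_of_gt hL0
          have hhne : ((h : ℝ) + 1) ^ d ≠ 0 := by positivity
          ring
      _ ≤ (1 / 2) * (w ^ (k * (h - 1) + 1) * (w / T) ^ (k - 1)) := by
          refine mul_le_mul_of_nonneg_left ?_ (by norm_num)
          exact mul_le_mul hwK hwT (by positivity) (by positivity)
      _ = (1 / 2) * (w ^ (h * k) / T ^ (k - 1)) := by
          rw [hsplit2, div_pow]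
          ring
  have hcomb : a ^ (k * (h - 1) + 1)
      / (2 * L ^ (4 * (k * (h - 1) + 1) + 5 * (k - 1)) * (((h : ℝ) + 1) ^ d) ^ (k - 1))
      ≤ ((k : ℝ) * h) ^ (k * h) * (a ^ (k * (h - 1) + 1) / L ^ (5 * k * h)) := by
    refine le_trans hLB (le_trans hhalf ?_)
    exact mul_le_mul_of_nonneg_left hRub (by positivity)
  have haK : (0 : ℝ) < a ^ (k * (h - 1) + 1) := by positivity
  have hBpos : (0 : ℝ) < 2 * L ^ (4 * (k * (h - 1) + 1) + 5 * (k - 1))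
      * (((h : ℝ) + 1) ^ d) ^ (k - 1) := by positivity
  have h5pos : (0 : ℝ) < L ^ (5 * k * h) := by positivity
  have h1 := (div_le_iff₀ hBpos).mp hcomb
  have h2 : a ^ (k * (h - 1) + 1) * L ^ (5 * k * h)
      ≤ a ^ (k * (h - 1) + 1) * (((k : ℝ) * h) ^ (k * h)
        * (2 * L ^ (4 * (k * (h - 1) + 1) + 5 * (k - 1)) * (((h : ℝ) + 1) ^ d) ^ (k - 1))) := by
    have h3 := mul_le_mul_of_nonneg_right h1 (le_of_lt h5pos)
    calc a ^ (k * (h - 1) + 1) * L ^ (5 * k * h)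
        ≤ ((k : ℝ) * h) ^ (k * h) * (a ^ (k * (h - 1) + 1) / L ^ (5 * k * h))
          * (2 * L ^ (4 * (k * (h - 1) + 1) + 5 * (k - 1)) * (((h : ℝ) + 1) ^ d) ^ (k - 1))
          * L ^ (5 * k * h) := h3
      _ = a ^ (k * (h - 1) + 1) * (((k : ℝ) * h) ^ (k * h)
          * (2 * L ^ (4 * (k * (h - 1) + 1) + 5 * (k - 1))
            * (((h : ℝ) + 1) ^ d) ^ (k - 1))) := by
          field_simp
  have h3 : L ^ (5 * k * h) ≤ ((k : ℝ) * h) ^ (k * h)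
      * (2 * L ^ (4 * (k * (h - 1) + 1) + 5 * (k - 1)) * (((h : ℝ) + 1) ^ d) ^ (k - 1)) :=
    le_of_mul_le_mul_left h2 haK
  have hL5kh : L ^ (5 * k * h)
      = L ^ (4 * (k * (h - 1) + 1) + 5 * (k - 1)) * L ^ (k * h - k + 1) := by
    rw [← pow_add, idC k h hk hh]
  rw [hL5kh] at h3
  have h4 : L ^ (4 * (k * (h - 1) + 1) + 5 * (k - 1)) * L ^ (k * h - k + 1)
      ≤ L ^ (4 * (k * (h - 1) + 1) + 5 * (k - 1))
        * (2 * ((k : ℝ) * h) ^ (k * h) * (((h : ℝ) + 1) ^ d) ^ (k - 1)) := by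
    calc L ^ (4 * (k * (h - 1) + 1) + 5 * (k - 1)) * L ^ (k * h - k + 1) ≤ _ := h3
      _ = L ^ (4 * (k * (h - 1) + 1) + 5 * (k - 1))
          * (2 * ((k : ℝ) * h) ^ (k * h) * (((h : ℝ) + 1) ^ d) ^ (k - 1)) := by ring
  have hfinal : L ^ (k * h - k + 1)
      ≤ 2 * ((k : ℝ) * h) ^ (k * h) * (((h : ℝ) + 1) ^ d) ^ (k - 1) :=
    le_of_mul_le_mul_left h4 (by positivity)
  have hHd : (((h : ℝ) + 1) ^ d) ^ (k - 1) = ((h : ℝ) + 1) ^ (d * (k - 1)) :=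
    (pow_mul _ d (k - 1)).symm
  rw [hHd] at hfinal
  have hcontr : L ≤ L ^ (k * h - k + 1) := le_self_pow₀ hL1 (Nat.succ_ne_zero _)
  linarith [hP3, hfinal, hcontr]

end WBound

set_option maxHeartbeats 4000000 in
/-- the number of rainbow-free colorings lying below some bad template is
exponentially small. -/
theorem stmt16 (d k h r : ℕ) (hd : 1 ≤ d) (hk : 2 ≤ k) (hh : 2 ≤ h) (hr : k * h ≤ r) :
    ∃ c : ℝ, 0 < c ∧ ∃ N : ℕ, ∀ n : ℕ, N ≤ n → ∀ A : Finset (Fin d → ℕ), A ⊆ grid n d →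
      (n : ℝ) ^ d / Real.logb 2 n ≤ (A.card : ℝ) →
      ∀ 𝒟 : Finset ((Fin d → ℕ) → Finset (Fin r)),
        (∀ P ∈ 𝒟, (rainbowCount d k h r A P : ℝ) ≤
          (A.card : ℝ) ^ (k * (h - 1) + 1) / (Real.logb 2 n) ^ (5 * k * h)) →
        (∀ P ∈ 𝒟, (A.card : ℝ) / (Real.logb 2 n) ^ 3 <
          ((A.filter fun x => (P x).card ≤ k * h - 2).card : ℝ)) →
        ((𝒟.card : ℝ) ≤ 2 ^ ((A.card : ℝ) *
          (n : ℝ) ^ (-(((k * (h - 1) * d : ℕ) : ℝ) / ((k * h - 1 : ℕ) : ℝ))) *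
          (Real.logb 2 n) ^ 10)) →
        (Nat.card {c' : ↥A → Fin r // ¬ HasRainbow d k h r A c' ∧
            ∃ P ∈ 𝒟, ∀ x : ↥A, c' x ∈ P x.val} : ℝ) ≤
          2 ^ (-(c * (A.card : ℝ) / (Real.logb 2 n) ^ 3)) * ((k * h : ℝ) - 1) ^ A.card := by
  classical
  have hkh4 : 4 ≤ k * h := le_trans (by norm_num) (Nat.mul_le_mul hk hh)
  have hr0 : 0 < r := by omega
  have hKH4 : (4 : ℝ) ≤ (k : ℝ) * h := by
    calc (4 : ℝ) = ((4 : ℕ) : ℝ) := by norm_num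
      _ ≤ ((k * h : ℕ) : ℝ) := by exact_mod_cast hkh4
      _ = (k : ℝ) * h := by push_cast; ring
  have hKH0 : (0 : ℝ) < (k : ℝ) * h := by linarith
  have hKH1 : (0 : ℝ) < (k : ℝ) * h - 1 := by linarith
  have hKH2 : (0 : ℝ) < (k : ℝ) * h - 2 := by linarith
  have hθpos : (0 : ℝ) < ((k : ℝ) * h - 2) / ((k : ℝ) * h - 1) := by positivity
  have hθlt1 : ((k : ℝ) * h - 2) / ((k : ℝ) * h - 1) < 1 := by
    rw [div_lt_one hKH1]; linarith
  have hβpos : 0 < Real.logb 2 (((k : ℝ) * h - 1) / ((k : ℝ) * h - 2)) := by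
    refine Real.logb_pos (by norm_num) ?_
    rw [lt_div_iff₀ hKH2]; linarith
  have hρpos : (0 : ℝ) < (r : ℝ) / ((k : ℝ) * h - 1) := by
    have hr0' : (0 : ℝ) < (r : ℝ) := by exact_mod_cast hr0
    positivity
  have hρ1 : (1 : ℝ) ≤ (r : ℝ) / ((k : ℝ) * h - 1) := by
    rw [le_div_iff₀ hKH1]
    have hcast : ((k * h : ℕ) : ℝ) ≤ (r : ℝ) := by exact_mod_cast hr
    push_cast at hcast
    linarith
  have hδpos : (0 : ℝ) < ((k * (h - 1) * d : ℕ) : ℝ) / ((k * h - 1 : ℕ) : ℝ) := by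
    have h1 : 0 < k * (h - 1) * d := Nat.mul_pos (Nat.mul_pos (by omega) (by omega)) (by omega)
    have h2 : 0 < k * h - 1 := by omega
    have h1' : (0 : ℝ) < ((k * (h - 1) * d : ℕ) : ℝ) := by exact_mod_cast h1
    have h2' : (0 : ℝ) < ((k * h - 1 : ℕ) : ℝ) := by exact_mod_cast h2
    positivity
  refine ⟨Real.logb 2 (((k : ℝ) * h - 1) / ((k : ℝ) * h - 2)) / 2, by positivity, ?_⟩
  have hC₃pos : (0 : ℝ) < 2 * ((k : ℝ) * h) ^ 2 * ((h : ℝ) + 1) ^ (d * (k - 1)) :=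
    mul_pos (mul_pos two_pos (pow_pos hKH0 2)) (pow_pos (by positivity) _)
  have hE1 := ev_logpow_le_rpow 1 one_pos 1 1 one_pos
  have hE2 := ev_logpow_le_rpow
    (1 / (2 * ((k : ℝ) * h) ^ 2 * ((h : ℝ) + 1) ^ (d * (k - 1))))
    (one_div_pos.mpr hC₃pos) (5 * k) 1 one_pos
  have hE3 : ∀ᶠ x : ℝ in Filter.atTop,
      2 * ((k : ℝ) * h) ^ (k * h) * ((h : ℝ) + 1) ^ (d * (k - 1)) + 1 ≤ Real.logb 2 x :=
    (Real.tendsto_logb_atTop one_lt_two).eventually_ge_atTop _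
  have hE4 : ∀ᶠ x : ℝ in Filter.atTop,
      (4 / Real.logb 2 (((k : ℝ) * h - 1) / ((k : ℝ) * h - 2)))
        * Real.logb 2 ((r : ℝ) / ((k : ℝ) * h - 1)) ≤ Real.logb 2 x :=
    (Real.tendsto_logb_atTop one_lt_two).eventually_ge_atTop _
  have hE5 := ev_logpow_le_rpow
    (Real.logb 2 (((k : ℝ) * h - 1) / ((k : ℝ) * h - 2)) / 4) (by positivity) 13
    (((k * (h - 1) * d : ℕ) : ℝ) / ((k * h - 1 : ℕ) : ℝ)) hδpos
  have hEnat := tendsto_natCast_atTop_atTop.eventually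
    ((((hE1.and hE2).and (hE3.and hE4)).and hE5))
  obtain ⟨N, hN⟩ := Filter.eventually_atTop.mp (hEnat.and (Filter.eventually_ge_atTop 2))
  refine ⟨N, ?_⟩
  intro n hn A hA hAcard 𝒟 hyp_a hyp_b hyp_c
  obtain ⟨⟨⟨⟨hP1, hP2⟩, hP3, hP4⟩, hP5⟩, hn2⟩ := hN n hn
  have hn2R : (2 : ℝ) ≤ (n : ℝ) := by exact_mod_cast hn2
  have hn0 : (0 : ℝ) < (n : ℝ) := by linarith
  have hC₄0 : (0 : ℝ) ≤ 2 * ((k : ℝ) * h) ^ (k * h) * ((h : ℝ) + 1) ^ (d * (k - 1)) := by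
    positivity
  have hL1 : (1 : ℝ) ≤ Real.logb 2 (n : ℝ) := by linarith [hP3]
  have hL0 : (0 : ℝ) < Real.logb 2 (n : ℝ) := by linarith
  have ha0 : (0 : ℝ) < (A.card : ℝ) := lt_of_lt_of_le (by positivity) hAcard
  -- bound on the number of points with large palettes
  have hWb : ∀ P ∈ 𝒟, ((A.filter fun x => k * h ≤ (P x).card).card : ℝ)
      ≤ (A.card : ℝ) / (Real.logb 2 n) ^ 4 :=
    fun P hP => filter_large_palette_bound hd hk hh hr A hA P (hyp_a P hP) hAcard hn2 hP2 hP3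
  -- per-template bound
  have hperP : ∀ P ∈ 𝒟, (∏ x ∈ A, ((P x).card : ℝ))
      ≤ ((k : ℝ) * h - 1) ^ A.card
        * ((((k : ℝ) * h - 2) / ((k : ℝ) * h - 1))
            ^ ((A.card : ℝ) / (Real.logb 2 n) ^ 3))
        * (((r : ℝ) / ((k : ℝ) * h - 1))
            ^ ((A.card : ℝ) / (Real.logb 2 n) ^ 4)) := by
    intro P hP
    refine le_trans (prod_palette_bound hkh4 hr A P) ?_
    have hb := le_of_lt (hyp_b P hP)
    have hw := hWb P hP
    have hθb : (((k : ℝ) * h - 2) / ((k : ℝ) * h - 1))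
        ^ ((A.filter fun x => (P x).card ≤ k * h - 2).card : ℕ)
        ≤ (((k : ℝ) * h - 2) / ((k : ℝ) * h - 1))
          ^ ((A.card : ℝ) / (Real.logb 2 n) ^ 3) := by
      rw [← Real.rpow_natCast (((k : ℝ) * h - 2) / ((k : ℝ) * h - 1))]
      exact Real.rpow_le_rpow_of_exponent_ge hθpos (le_of_lt hθlt1) hb
    have hρw : ((r : ℝ) / ((k : ℝ) * h - 1))
        ^ ((A.filter fun x => k * h ≤ (P x).card).card : ℕ)
        ≤ ((r : ℝ) / ((k : ℝ) * h - 1))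
          ^ ((A.card : ℝ) / (Real.logb 2 n) ^ 4) := by
      rw [← Real.rpow_natCast ((r : ℝ) / ((k : ℝ) * h - 1))]
      exact Real.rpow_le_rpow_of_exponent_le hρ1 hw
    refine mul_le_mul (mul_le_mul_of_nonneg_left hθb (by positivity)) hρw
      (by positivity) ?_
    have h1 : (0 : ℝ) ≤ ((k : ℝ) * h - 1) ^ A.card := by positivity
    have h2 : (0 : ℝ) ≤ (((k : ℝ) * h - 2) / ((k : ℝ) * h - 1))
        ^ ((A.card : ℝ) / (Real.logb 2 n) ^ 3) := Real.rpow_nonneg (le_of_lt hθpos) _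
    exact mul_nonneg h1 h2
  -- sum over the templates
  have hsum : (Nat.card {c' : ↥A → Fin r // ¬ HasRainbow d k h r A c' ∧
      ∃ P ∈ 𝒟, ∀ x : ↥A, c' x ∈ P x.val} : ℝ)
      ≤ (𝒟.card : ℝ) * (((k : ℝ) * h - 1) ^ A.card
        * ((((k : ℝ) * h - 2) / ((k : ℝ) * h - 1))
            ^ ((A.card : ℝ) / (Real.logb 2 n) ^ 3))
        * (((r : ℝ) / ((k : ℝ) * h - 1))
            ^ ((A.card : ℝ) / (Real.logb 2 n) ^ 4))) := by
    calc (Nat.card {c' : ↥A → Fin r // ¬ HasRainbow d k h r A c' ∧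
        ∃ P ∈ 𝒟, ∀ x : ↥A, c' x ∈ P x.val} : ℝ)
        ≤ ((∑ P ∈ 𝒟, ∏ x ∈ A, (P x).card : ℕ) : ℝ) := by
          exact_mod_cast main_count_le (d := d) (k := k) (h := h) (r := r) A 𝒟
      _ = ∑ P ∈ 𝒟, ∏ x ∈ A, ((P x).card : ℝ) := by push_cast; rfl
      _ ≤ ∑ _P ∈ 𝒟, (((k : ℝ) * h - 1) ^ A.card
          * ((((k : ℝ) * h - 2) / ((k : ℝ) * h - 1))
              ^ ((A.card : ℝ) / (Real.logb 2 n) ^ 3))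
          * (((r : ℝ) / ((k : ℝ) * h - 1))
              ^ ((A.card : ℝ) / (Real.logb 2 n) ^ 4))) :=
          Finset.sum_le_sum (fun P hP => hperP P hP)
      _ = _ := by rw [Finset.sum_const, nsmul_eq_mul]
  -- rewriting the two rpow factors in base 2
  have hθ2 : ((k : ℝ) * h - 2) / ((k : ℝ) * h - 1)
      = (2 : ℝ) ^ (-(Real.logb 2 (((k : ℝ) * h - 1) / ((k : ℝ) * h - 2)))) := by
    have harg : (0 : ℝ) < ((k : ℝ) * h - 1) / ((k : ℝ) * h - 2) := by positivity
    have h2β := Real.rpow_logb (b := 2) (by norm_num) (by norm_num) harg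
    rw [Real.rpow_neg (by norm_num : (0 : ℝ) ≤ 2), h2β, inv_div]
  have hρ2 : (r : ℝ) / ((k : ℝ) * h - 1)
      = (2 : ℝ) ^ (Real.logb 2 ((r : ℝ) / ((k : ℝ) * h - 1))) :=
    (Real.rpow_logb (by norm_num) (by norm_num) hρpos).symm
  -- the exponent inequality
  have hexp : (A.card : ℝ) * (n : ℝ) ^ (-(((k * (h - 1) * d : ℕ) : ℝ) / ((k * h - 1 : ℕ) : ℝ)))
        * (Real.logb 2 n) ^ 10
      + (-(Real.logb 2 (((k : ℝ) * h - 1) / ((k : ℝ) * h - 2))))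
          * ((A.card : ℝ) / (Real.logb 2 n) ^ 3)
      + Real.logb 2 ((r : ℝ) / ((k : ℝ) * h - 1)) * ((A.card : ℝ) / (Real.logb 2 n) ^ 4)
      ≤ -(Real.logb 2 (((k : ℝ) * h - 1) / ((k : ℝ) * h - 2)) / 2
          * (A.card : ℝ) / (Real.logb 2 n) ^ 3) := by
    have hnδ : (0 : ℝ) < (n : ℝ) ^ (((k * (h - 1) * d : ℕ) : ℝ) / ((k * h - 1 : ℕ) : ℝ)) :=
      Real.rpow_pos_of_pos hn0 _
    have hEb : (A.card : ℝ)
        * (n : ℝ) ^ (-(((k * (h - 1) * d : ℕ) : ℝ) / ((k * h - 1 : ℕ) : ℝ)))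
        * (Real.logb 2 n) ^ 10
        ≤ Real.logb 2 (((k : ℝ) * h - 1) / ((k : ℝ) * h - 2)) / 4
          * ((A.card : ℝ) / (Real.logb 2 n) ^ 3) := by
      have hEeq : (A.card : ℝ)
          * (n : ℝ) ^ (-(((k * (h - 1) * d : ℕ) : ℝ) / ((k * h - 1 : ℕ) : ℝ)))
          * (Real.logb 2 n) ^ 10
          = (A.card : ℝ) * (Real.logb 2 n) ^ 10
            / (n : ℝ) ^ (((k * (h - 1) * d : ℕ) : ℝ) / ((k * h - 1 : ℕ) : ℝ)) := by
        rw [Real.rpow_neg (le_of_lt hn0)]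
        ring
      rw [hEeq, div_le_iff₀ hnδ]
      have hL3 : (0 : ℝ) < (Real.logb 2 n) ^ 3 := by positivity
      calc (A.card : ℝ) * (Real.logb 2 n) ^ 10
          = ((A.card : ℝ) / (Real.logb 2 n) ^ 3) * (Real.logb 2 n) ^ 13 := by
            rw [div_mul_eq_mul_div, eq_div_iff hL3.ne']
            ring
        _ ≤ ((A.card : ℝ) / (Real.logb 2 n) ^ 3)
            * (Real.logb 2 (((k : ℝ) * h - 1) / ((k : ℝ) * h - 2)) / 4
              * (n : ℝ) ^ (((k * (h - 1) * d : ℕ) : ℝ) / ((k * h - 1 : ℕ) : ℝ))) :=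
            mul_le_mul_of_nonneg_left hP5 (div_nonneg (Nat.cast_nonneg _) hL3.le)
        _ = Real.logb 2 (((k : ℝ) * h - 1) / ((k : ℝ) * h - 2)) / 4
            * ((A.card : ℝ) / (Real.logb 2 n) ^ 3)
            * (n : ℝ) ^ (((k * (h - 1) * d : ℕ) : ℝ) / ((k * h - 1 : ℕ) : ℝ)) := by
            ring
    have hrb : Real.logb 2 ((r : ℝ) / ((k : ℝ) * h - 1))
        * ((A.card : ℝ) / (Real.logb 2 n) ^ 4)
        ≤ Real.logb 2 (((k : ℝ) * h - 1) / ((k : ℝ) * h - 2)) / 4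
          * ((A.card : ℝ) / (Real.logb 2 n) ^ 3) := by
      have h1 : Real.logb 2 ((r : ℝ) / ((k : ℝ) * h - 1))
          ≤ Real.logb 2 (((k : ℝ) * h - 1) / ((k : ℝ) * h - 2)) / 4 * Real.logb 2 n := by
        have hid : Real.logb 2 ((r : ℝ) / ((k : ℝ) * h - 1))
            = Real.logb 2 (((k : ℝ) * h - 1) / ((k : ℝ) * h - 2)) / 4
              * ((4 / Real.logb 2 (((k : ℝ) * h - 1) / ((k : ℝ) * h - 2)))
                * Real.logb 2 ((r : ℝ) / ((k : ℝ) * h - 1))) := by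
          field_simp
        rw [hid]
        exact mul_le_mul_of_nonneg_left hP4 (by positivity)
      calc Real.logb 2 ((r : ℝ) / ((k : ℝ) * h - 1))
          * ((A.card : ℝ) / (Real.logb 2 n) ^ 4)
          ≤ (Real.logb 2 (((k : ℝ) * h - 1) / ((k : ℝ) * h - 2)) / 4 * Real.logb 2 n)
            * ((A.card : ℝ) / (Real.logb 2 n) ^ 4) :=
            mul_le_mul_of_nonneg_right h1 (div_nonneg (Nat.cast_nonneg _) (pow_nonneg hL0.le _))
        _ = Real.logb 2 (((k : ℝ) * h - 1) / ((k : ℝ) * h - 2)) / 4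
            * ((A.card : ℝ) / (Real.logb 2 n) ^ 3) := by
            have hLne : Real.logb 2 (n : ℝ) ≠ 0 := ne_of_gt hL0
            generalize Real.logb 2 (n : ℝ) = X at hLne ⊢
            rw [pow_succ X 3, ← div_div, mul_assoc, mul_div_assoc', mul_div_cancel_left₀ _ hLne]
    have h3 : (-(Real.logb 2 (((k : ℝ) * h - 1) / ((k : ℝ) * h - 2))))
        * ((A.card : ℝ) / (Real.logb 2 n) ^ 3)
        = -(Real.logb 2 (((k : ℝ) * h - 1) / ((k : ℝ) * h - 2)) * (A.card : ℝ)
            / (Real.logb 2 n) ^ 3) := by ring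
    have h4 : -(Real.logb 2 (((k : ℝ) * h - 1) / ((k : ℝ) * h - 2)) / 2
          * (A.card : ℝ) / (Real.logb 2 n) ^ 3)
        = -(Real.logb 2 (((k : ℝ) * h - 1) / ((k : ℝ) * h - 2)) * (A.card : ℝ)
            / (Real.logb 2 n) ^ 3)
          + Real.logb 2 (((k : ℝ) * h - 1) / ((k : ℝ) * h - 2)) / 4
            * ((A.card : ℝ) / (Real.logb 2 n) ^ 3)
          + Real.logb 2 (((k : ℝ) * h - 1) / ((k : ℝ) * h - 2)) / 4
            * ((A.card : ℝ) / (Real.logb 2 n) ^ 3) := by ring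
    rw [h3, h4]
    linarith [hEb, hrb]
  -- power assembly
  have hpow : (2 : ℝ) ^ ((A.card : ℝ)
        * (n : ℝ) ^ (-(((k * (h - 1) * d : ℕ) : ℝ) / ((k * h - 1 : ℕ) : ℝ)))
        * (Real.logb 2 n) ^ 10)
      * (((k : ℝ) * h - 1) ^ A.card
        * ((((k : ℝ) * h - 2) / ((k : ℝ) * h - 1))
            ^ ((A.card : ℝ) / (Real.logb 2 n) ^ 3))
        * (((r : ℝ) / ((k : ℝ) * h - 1))
            ^ ((A.card : ℝ) / (Real.logb 2 n) ^ 4)))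
      = ((k : ℝ) * h - 1) ^ A.card
        * (2 : ℝ) ^ ((A.card : ℝ)
            * (n : ℝ) ^ (-(((k * (h - 1) * d : ℕ) : ℝ) / ((k * h - 1 : ℕ) : ℝ)))
            * (Real.logb 2 n) ^ 10
          + (-(Real.logb 2 (((k : ℝ) * h - 1) / ((k : ℝ) * h - 2))))
              * ((A.card : ℝ) / (Real.logb 2 n) ^ 3)
          + Real.logb 2 ((r : ℝ) / ((k : ℝ) * h - 1))
              * ((A.card : ℝ) / (Real.logb 2 n) ^ 4)) := by
    have hθ3 : (((k : ℝ) * h - 2) / ((k : ℝ) * h - 1))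
        ^ ((A.card : ℝ) / (Real.logb 2 n) ^ 3)
        = (2 : ℝ) ^ ((-(Real.logb 2 (((k : ℝ) * h - 1) / ((k : ℝ) * h - 2))))
            * ((A.card : ℝ) / (Real.logb 2 n) ^ 3)) := by
      rw [Real.rpow_mul (by norm_num : (0 : ℝ) ≤ 2), ← hθ2]
    have hρ3 : ((r : ℝ) / ((k : ℝ) * h - 1)) ^ ((A.card : ℝ) / (Real.logb 2 n) ^ 4)
        = (2 : ℝ) ^ (Real.logb 2 ((r : ℝ) / ((k : ℝ) * h - 1))
            * ((A.card : ℝ) / (Real.logb 2 n) ^ 4)) := by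
      rw [Real.rpow_mul (by norm_num : (0 : ℝ) ≤ 2), ← hρ2]
    rw [hθ3, hρ3, Real.rpow_add (by norm_num : (0 : ℝ) < 2),
      Real.rpow_add (by norm_num : (0 : ℝ) < 2)]
    ring
  have hU0 : (0 : ℝ) ≤ ((k : ℝ) * h - 1) ^ A.card
      * ((((k : ℝ) * h - 2) / ((k : ℝ) * h - 1))
          ^ ((A.card : ℝ) / (Real.logb 2 n) ^ 3))
      * (((r : ℝ) / ((k : ℝ) * h - 1))
          ^ ((A.card : ℝ) / (Real.logb 2 n) ^ 4)) := by
    have h1 : (0 : ℝ) ≤ ((k : ℝ) * h - 1) ^ A.card := by positivity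
    have h2 : (0 : ℝ) ≤ (((k : ℝ) * h - 2) / ((k : ℝ) * h - 1))
        ^ ((A.card : ℝ) / (Real.logb 2 n) ^ 3) := Real.rpow_nonneg (le_of_lt hθpos) _
    have h3 : (0 : ℝ) ≤ ((r : ℝ) / ((k : ℝ) * h - 1))
        ^ ((A.card : ℝ) / (Real.logb 2 n) ^ 4) := Real.rpow_nonneg (le_of_lt hρpos) _
    exact mul_nonneg (mul_nonneg h1 h2) h3
  refine le_trans hsum (le_trans (mul_le_mul_of_nonneg_right hyp_c hU0) ?_)
  rw [hpow]
  have hmono : (2 : ℝ) ^ ((A.card : ℝ)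
        * (n : ℝ) ^ (-(((k * (h - 1) * d : ℕ) : ℝ) / ((k * h - 1 : ℕ) : ℝ)))
        * (Real.logb 2 n) ^ 10
      + (-(Real.logb 2 (((k : ℝ) * h - 1) / ((k : ℝ) * h - 2))))
          * ((A.card : ℝ) / (Real.logb 2 n) ^ 3)
      + Real.logb 2 ((r : ℝ) / ((k : ℝ) * h - 1))
          * ((A.card : ℝ) / (Real.logb 2 n) ^ 4))
      ≤ (2 : ℝ) ^ (-(Real.logb 2 (((k : ℝ) * h - 1) / ((k : ℝ) * h - 2)) / 2
          * (A.card : ℝ) / (Real.logb 2 n) ^ 3)) :=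
    Real.rpow_le_rpow_of_exponent_le (by norm_num) hexp
  refine le_trans (mul_le_mul_of_nonneg_left hmono (by positivity)) ?_
  rw [mul_comm]
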